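/- If m ≥ 1 and n ≥ 2 are integers with n ≡ 2 (mod 3), then the bondage number of K_m ⊠ P_n satisfies b(K_m ⊠ P_n) ≥ m; equivalently, for every edge set Z ⊆ E(K_m ⊠ P_n) with |Z| < m, one has γ(K_m ⊠ P_n − Z) = γ(K_m ⊠ P_n). -/

import Mathlib

open SimpleGraph Finset

/-- `D` is a dominating set of `G`: every vertex is in `D` or adjacent to a vertex of `D`. -/
def SimpleGraph.IsDominatingSet {V : Type*} (G : SimpleGraph V) (D : Set V) : Prop :=
  ∀ v : V, v ∈ D ∨ ∃ u ∈ D, G.Adj u v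

/-- The domination number of a finite graph. -/
noncomputable def SimpleGraph.dominationNumber {V : Type*} [Fintype V]
    (G : SimpleGraph V) : ℕ :=
  sInf {k | ∃ D : Finset V, D.card = k ∧ G.IsDominatingSet ↑D}

/-- The bondage number of a finite graph: the least size of a set of edges whose removal
increases the domination number. -/
noncomputable def SimpleGraph.bondageNumber {V : Type*} [Fintype V]
    (G : SimpleGraph V) : ℕ :=
  sInf {k | ∃ Z : Finset (Sym2 V), Z.card = k ∧ (↑Z : Set (Sym2 V)) ⊆ G.edgeSet ∧
    G.dominationNumber < (G.deleteEdges ↑Z).dominationNumber}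

/-- The strong product of two simple graphs. -/
def SimpleGraph.strongProd {V W : Type*} (G : SimpleGraph V) (H : SimpleGraph W) :
    SimpleGraph (V × W) :=
  SimpleGraph.fromRel (fun a b =>
    (a.1 = b.1 ∧ H.Adj a.2 b.2) ∨ (G.Adj a.1 b.1 ∧ a.2 = b.2) ∨
      (G.Adj a.1 b.1 ∧ H.Adj a.2 b.2))

infixl:70 " ⊠ " => SimpleGraph.strongProd

lemma KP_adj {m n : ℕ} (a b : Fin m × Fin n) :
    ((⊤ : SimpleGraph (Fin m)) ⊠ pathGraph n).Adj a b ↔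
      a ≠ b ∧ ((a.2 : ℕ) = b.2 ∨ (a.2 : ℕ) + 1 = b.2 ∨ (b.2 : ℕ) + 1 = a.2) := by
  simp only [SimpleGraph.strongProd, fromRel_adj, top_adj, pathGraph_adj]
  constructor
  · rintro ⟨hne, h⟩
    refine ⟨hne, ?_⟩
    rcases h with (⟨h1,h2⟩|⟨h1,h2⟩|⟨h1,h2⟩)|(⟨h1,h2⟩|⟨h1,h2⟩|⟨h1,h2⟩) <;> omega
  · rintro ⟨hne, h⟩
    refine ⟨hne, ?_⟩
    by_cases hr : a.1 = b.1
    · have hc : (a.2 : ℕ) ≠ b.2 := by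
        intro hc
        exact hne (Prod.ext hr (Fin.ext hc))
      left; left; exact ⟨hr, by omega⟩
    · by_cases hc : (a.2 : ℕ) = b.2
      · left; right; left; exact ⟨hr, Fin.ext hc⟩
      · left; right; right; exact ⟨hr, by omega⟩


lemma sym2_filter_card_le {V : Type*} [Fintype V] [DecidableEq V] (e : Sym2 V) :
    (Finset.univ.filter (· ∈ e)).card ≤ 2 := by
  induction e using Sym2.ind with
  | _ x y =>
    have hsub : Finset.univ.filter (· ∈ (s(x,y) : Sym2 V)) ⊆ {x, y} := by
      intro v hv
      simp only [Finset.mem_filter, Sym2.mem_iff] at hv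
      simp [hv.2]
    refine le_trans (Finset.card_le_card hsub) ?_
    refine le_trans (Finset.card_insert_le _ _) ?_
    simp

lemma construction {m n : ℕ} (hm : 1 ≤ m) (k : ℕ) (hnk : n = 3*k+2)
    (Z : Finset (Sym2 (Fin m × Fin n))) (hZ : Z.card < m) :
    ∃ D : Finset (Fin m × Fin n), D.card = k+1 ∧
      (((⊤ : SimpleGraph (Fin m)) ⊠ pathGraph n).deleteEdges ↑Z).IsDominatingSet ↑D := by
  classical
  set good : Fin n → Prop := fun c => ∃ r : Fin m, ∀ e ∈ Z, ((r, c) : Fin m × Fin n) ∉ e with hgood_def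
  -- at most one "bad" column
  have hpair : ∀ c1 c2 : Fin n, c1 ≠ c2 → good c1 ∨ good c2 := by
    intro c1 c2 hne
    by_contra hcon
    push_neg at hcon
    obtain ⟨h1, h2⟩ := hcon
    simp only [hgood_def, not_exists, not_forall] at h1 h2
    set T : Finset (Fin m × Fin n) := Z.biUnion (fun e => Finset.univ.filter (· ∈ e)) with hT_def
    have hTcard : T.card ≤ 2 * Z.card := by
      refine le_trans (Finset.card_biUnion_le) ?_
      calc ∑ e ∈ Z, (Finset.univ.filter (· ∈ e)).card ≤ ∑ _e ∈ Z, 2 :=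
            Finset.sum_le_sum (fun e _ => sym2_filter_card_le e)
        _ = 2 * Z.card := by rw [Finset.sum_const, smul_eq_mul, mul_comm]
    have hsub : ((Finset.univ : Finset (Fin m)) ×ˢ ({c1, c2} : Finset (Fin n))) ⊆ T := by
      intro v hv
      simp only [Finset.mem_product, Finset.mem_univ, Finset.mem_insert,
        Finset.mem_singleton, true_and] at hv
      have : ∃ e ∈ Z, v ∈ e := by
        rcases hv with hv | hv
        · obtain ⟨e, he, hve⟩ := h1 v.1
          push_neg at hve
          exact ⟨e, he, by rw [← hv] at hve; simpa using hve⟩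
        · obtain ⟨e, he, hve⟩ := h2 v.1
          push_neg at hve
          exact ⟨e, he, by rw [← hv] at hve; simpa using hve⟩
      obtain ⟨e, he, hve⟩ := this
      rw [hT_def, Finset.mem_biUnion]
      exact ⟨e, he, by simp [hve]⟩
    have hcard2 : ((Finset.univ : Finset (Fin m)) ×ˢ ({c1, c2} : Finset (Fin n))).card = m * 2 := by
      simp [Finset.card_pair hne, mul_comm]
    have := Finset.card_le_card hsub
    omega
  -- choose the break point s
  have hbound : ∀ t : ℕ, t ≤ k → 3 * t + 1 < n := by omega
  obtain ⟨s, hsgood⟩ : ∃ s : ℕ, ∀ t : Fin (k+1),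
      good ⟨if (t : ℕ) < s then 3 * t + 1 else 3 * t, by
        split <;> [exact hbound t (by omega); omega]⟩ := by
    by_cases hall : ∀ t : Fin (k+1), good ⟨3 * t + 1, hbound t (by omega)⟩
    · refine ⟨k + 1, fun t => ?_⟩
      have ht : (t : ℕ) < k + 1 := t.isLt
      simpa [ht] using hall t
    · push_neg at hall
      obtain ⟨t0, ht0⟩ := hall
      refine ⟨(t0 : ℕ), fun t => ?_⟩
      have hne : (⟨if (t : ℕ) < (t0 : ℕ) then 3 * t + 1 else 3 * t, by
          split <;> [exact hbound t (by omega); omega]⟩ : Fin n) ≠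
          ⟨3 * t0 + 1, hbound t0 (by omega)⟩ := by
        simp only [ne_eq, Fin.mk.injEq]
        split
        · omega
        · omega
      rcases hpair _ _ hne with h | h
      · exact h
      · exact absurd h ht0
  -- choose rows
  have hgood' : ∀ t : Fin (k+1), ∃ r : Fin m, ∀ e ∈ Z,
      ((r, (⟨if (t : ℕ) < s then 3 * t + 1 else 3 * t, by
        split <;> [exact hbound t (by omega); omega]⟩ : Fin n)) : Fin m × Fin n) ∉ e :=
    fun t => hsgood t
  choose row hrow using hgood'
  set colFin : Fin (k+1) → Fin n := fun t => ⟨if (t : ℕ) < s then 3 * t + 1 else 3 * t, by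
        split <;> [exact hbound t (by omega); omega]⟩ with hcolFin
  refine ⟨Finset.univ.image (fun t : Fin (k+1) => ((row t, colFin t) : Fin m × Fin n)), ?_, ?_⟩
  · rw [Finset.card_image_of_injective _ ?_, Finset.card_univ, Fintype.card_fin]
    intro t t' h
    have h2 : colFin t = colFin t' := congrArg Prod.snd h
    simp only [hcolFin, Fin.mk.injEq] at h2
    have : (t : ℕ) = t' := by
      rcases Nat.lt_or_ge (t : ℕ) s with h' | h' <;>
        rcases Nat.lt_or_ge (t' : ℕ) s with h'' | h'' <;>
        simp [h', h'', Nat.not_lt.mpr] at h2 <;> omega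
    exact Fin.ext this
  · intro v
    -- coverage
    have hcval : (v.2 : ℕ) ≤ 3 * k + 1 := by have := v.2.isLt; omega
    have hdm : 3 * ((v.2 : ℕ) / 3) + (v.2 : ℕ) % 3 = (v.2 : ℕ) := Nat.div_add_mod _ 3
    have hmod : (v.2 : ℕ) % 3 < 3 := Nat.mod_lt _ (by norm_num)
    obtain ⟨t, htk, hb1, hb2⟩ : ∃ t : ℕ, t ≤ k ∧
        (if t < s then 3 * t + 1 else 3 * t) ≤ (v.2 : ℕ) + 1 ∧
        (v.2 : ℕ) ≤ (if t < s then 3 * t + 1 else 3 * t) + 1 := by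
      set q := (v.2 : ℕ) / 3 with hq
      by_cases hqs : q < s
      · exact ⟨q, by omega, by simp [hqs]; omega, by simp [hqs]; omega⟩
      · by_cases hr2 : (v.2 : ℕ) % 3 ≤ 1
        · exact ⟨q, by omega, by simp [hqs]; omega, by simp [hqs]; omega⟩
        · have hq1 : ¬ (q + 1 < s) := by omega
          exact ⟨q + 1, by omega, by simp [hq1]; omega, by simp [hq1]; omega⟩
    set tf : Fin (k+1) := ⟨t, by omega⟩ with htf
    have hcolval : ((colFin tf : Fin n) : ℕ) = if t < s then 3 * t + 1 else 3 * t := by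
      simp [hcolFin, htf]
    set d : Fin m × Fin n := (row tf, colFin tf) with hd
    have hdD : d ∈ (Finset.univ.image (fun t : Fin (k+1) => ((row t, colFin t) : Fin m × Fin n)) : Finset _) :=
      Finset.mem_image.mpr ⟨tf, Finset.mem_univ _, rfl⟩
    by_cases hvd : v = d
    · left; rw [hvd]; exact hdD
    · right
      refine ⟨d, hdD, ?_⟩
      rw [SimpleGraph.deleteEdges_adj]
      constructor
      · rw [KP_adj]
        refine ⟨fun h => hvd h.symm, ?_⟩
        rw [hcolval] at *
        omega
      · intro hmem
        rw [Finset.mem_coe] at hmem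
        exact hrow tf _ hmem (Sym2.mem_mk_left _ _)

lemma dom_lower {m n : ℕ} (hm : 1 ≤ m) (k : ℕ) (hnk : n = 3*k+2)
    (D : Finset (Fin m × Fin n))
    (hD : ((⊤ : SimpleGraph (Fin m)) ⊠ pathGraph n).IsDominatingSet ↑D) :
    k + 1 ≤ D.card := by
  classical
  set r0 : Fin m := ⟨0, hm⟩ with hr0
  have hdom : ∀ c : Fin n, ∃ d : Fin m × Fin n, d ∈ D ∧
      (d.2 : ℕ) ≤ (c : ℕ) + 1 ∧ (c : ℕ) ≤ (d.2 : ℕ) + 1 := by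
    intro c
    rcases hD (r0, c) with h | ⟨u, hu, hadj⟩
    · exact ⟨(r0, c), by simpa using h, Nat.le_succ _, Nat.le_succ _⟩
    · rw [KP_adj] at hadj
      have hcol : (u.2 : ℕ) = (c : ℕ) ∨ (u.2 : ℕ) + 1 = (c : ℕ) ∨ (c : ℕ) + 1 = (u.2 : ℕ) :=
        hadj.2
      exact ⟨u, by simpa using hu, by omega, by omega⟩
  choose f hf1 hf2 hf3 using hdom
  have hsum := Finset.card_eq_sum_card_fiberwise (f := f) (s := Finset.univ) (t := D)
    (fun c _ => by simpa using hf1 c)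
  have hfib : ∀ d ∈ D, (Finset.univ.filter (fun c => f c = d)).card ≤ 3 := by
    intro d _
    have h1 : (Finset.univ.filter (fun c => f c = d)).card ≤
        (({(d.2 : ℕ) - 1, (d.2 : ℕ), (d.2 : ℕ) + 1} : Finset ℕ)).card := by
      refine Finset.card_le_card_of_injOn (fun c => (c : ℕ)) ?_ ?_
      · intro c hc
        simp only [Finset.mem_coe, Finset.mem_filter, Finset.mem_univ, true_and] at hc
        have h2 := hf2 c
        have h3 := hf3 c
        rw [hc] at h2 h3
        simp only [Finset.mem_coe, Finset.mem_insert, Finset.mem_singleton]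
        omega
      · intro a _ b _ hab
        exact Fin.ext hab
    refine le_trans h1 ?_
    refine le_trans (Finset.card_insert_le _ _) ?_
    refine Nat.succ_le_succ (le_trans (Finset.card_insert_le _ _) ?_)
    simp
  have hcard : (Finset.univ : Finset (Fin n)).card = n := by simp
  have : (Finset.univ : Finset (Fin n)).card ≤ 3 * D.card := by
    rw [hsum]
    calc ∑ d ∈ D, (Finset.univ.filter (fun c => f c = d)).card ≤ ∑ _d ∈ D, 3 :=
          Finset.sum_le_sum hfib
      _ = 3 * D.card := by rw [Finset.sum_const, smul_eq_mul, mul_comm]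
  omega

lemma univ_dominates {V : Type*} [Fintype V] (G : SimpleGraph V) :
    G.IsDominatingSet ↑(Finset.univ : Finset V) := fun v => Or.inl (by simp)

lemma dom_set_nonempty {V : Type*} [Fintype V] (G : SimpleGraph V) :
    {k | ∃ D : Finset V, D.card = k ∧ G.IsDominatingSet ↑D}.Nonempty :=
  ⟨(Finset.univ : Finset V).card, Finset.univ, rfl, univ_dominates G⟩

/-- **Lemma.** If `m ≥ 1`, `n ≥ 2` and `n ≡ 2 (mod 3)`, then `b(K_m ⊠ P_n) ≥ m`;
equivalently, removing any set of fewer than `m` edges does not change the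
domination number. -/
theorem bondage_ge_of_mod_three_eq_two (m n : ℕ) (hm : 1 ≤ m) (hn : 2 ≤ n)
    (h3 : n % 3 = 2) :
    m ≤ ((⊤ : SimpleGraph (Fin m)) ⊠ pathGraph n).bondageNumber ∧
    ∀ Z : Finset (Sym2 (Fin m × Fin n)),
      (↑Z : Set (Sym2 (Fin m × Fin n))) ⊆
          ((⊤ : SimpleGraph (Fin m)) ⊠ pathGraph n).edgeSet →
      Z.card < m →
      (((⊤ : SimpleGraph (Fin m)) ⊠ pathGraph n).deleteEdges ↑Z).dominationNumber =
        ((⊤ : SimpleGraph (Fin m)) ⊠ pathGraph n).dominationNumber := by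
  classical
  obtain ⟨k, hnk⟩ : ∃ k, n = 3 * k + 2 := ⟨n / 3, by omega⟩
  set G := (⊤ : SimpleGraph (Fin m)) ⊠ pathGraph n with hG
  have hlbG : k + 1 ≤ G.dominationNumber := by
    refine le_csInf (dom_set_nonempty G) ?_
    rintro x ⟨D', hc, hd⟩
    exact hc ▸ dom_lower hm k hnk D' hd
  have part2 : ∀ Z : Finset (Sym2 (Fin m × Fin n)),
      (↑Z : Set (Sym2 (Fin m × Fin n))) ⊆ G.edgeSet → Z.card < m →
      (G.deleteEdges ↑Z).dominationNumber = G.dominationNumber := by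
    intro Z hsub hcard
    obtain ⟨D, hDcard, hDdom⟩ := construction hm k hnk Z hcard
    have hub : (G.deleteEdges ↑Z).dominationNumber ≤ k + 1 :=
      Nat.sInf_le ⟨D, hDcard, hDdom⟩
    have hmono : G.dominationNumber ≤ (G.deleteEdges ↑Z).dominationNumber := by
      obtain ⟨D', hc, hd⟩ := Nat.sInf_mem (dom_set_nonempty (G.deleteEdges ↑Z))
      refine Nat.sInf_le ⟨D', hc, ?_⟩
      intro v
      rcases hd v with h | ⟨u, hu, ha⟩
      · exact Or.inl h
      · rw [SimpleGraph.deleteEdges_adj] at ha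
        exact Or.inr ⟨u, hu, ha.1⟩
    omega
  have hGub : G.dominationNumber ≤ k + 1 := by
    obtain ⟨D, hDcard, hDdom⟩ := construction hm k hnk (∅ : Finset (Sym2 (Fin m × Fin n)))
      (by simp; omega)
    refine Nat.sInf_le ⟨D, hDcard, ?_⟩
    intro v
    rcases hDdom v with h | ⟨u, hu, ha⟩
    · exact Or.inl h
    · rw [SimpleGraph.deleteEdges_adj] at ha
      exact Or.inr ⟨u, hu, ha.1⟩
  have hGval : G.dominationNumber = k + 1 := le_antisymm hGub hlbG
  constructor
  · -- bondage set nonempty witness: delete all edges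
    set Z0 : Finset (Sym2 (Fin m × Fin n)) := G.edgeSet.toFinset with hZ0def
    have hZ0 : (↑Z0 : Set (Sym2 (Fin m × Fin n))) = G.edgeSet := Set.coe_toFinset _
    have hbig : ∀ x ∈ {j | ∃ D : Finset (Fin m × Fin n), D.card = j ∧
        (G.deleteEdges ↑Z0).IsDominatingSet ↑D}, m * n ≤ x := by
      rintro x ⟨D, hc, hd⟩
      have hsub : (Finset.univ : Finset (Fin m × Fin n)) ⊆ D := by
        intro v _
        rcases hd v with h | ⟨u, hu, ha⟩
        · simpa using h
        · rw [SimpleGraph.deleteEdges_adj] at ha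
          exact absurd (hZ0 ▸ ha.2) (by simpa using ha.1)
      have := Finset.card_le_card hsub
      simp only [Finset.card_univ, Fintype.card_prod, Fintype.card_fin] at this
      omega
    have hδ : m * n ≤ (G.deleteEdges ↑Z0).dominationNumber :=
      le_csInf (dom_set_nonempty _) hbig
    have hlt : G.dominationNumber < (G.deleteEdges ↑Z0).dominationNumber := by
      have hmn : n ≤ m * n := Nat.le_mul_of_pos_left n hm
      omega
    have hbne : {j | ∃ Z : Finset (Sym2 (Fin m × Fin n)), Z.card = j ∧
        (↑Z : Set (Sym2 (Fin m × Fin n))) ⊆ G.edgeSet ∧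
        G.dominationNumber < (G.deleteEdges ↑Z).dominationNumber}.Nonempty :=
      ⟨Z0.card, Z0, rfl, by rw [hZ0], hlt⟩
    refine le_csInf hbne ?_
    rintro x ⟨Z, hcard, hs, hlt'⟩
    by_contra h
    push_neg at h
    have := part2 Z hs (by omega)
    omega
  · exact part2
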